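/- Let 𝒴(φ) = (φ(φ−2) + √2(φ−1) + 1)/(√2·φ) and s(φ,τ) = −λ(τ)φ² with λ'(τ) = −δλ(τ). Then (∂_τ − ℰ)[𝒴 + s] = λ(τ)·((δ + 3λ(τ) − 1)φ² + 2(2 − √2)φ − 3(2 − √2)/φ), where ℰ[y] = y·y_{φφ} + (2 − φ − y_φ)y_φ + y(1 − y/φ²). -/

import Mathlib

noncomputable def Yfik (x : ℝ) : ℝ :=
  (x * (x - 2) + Real.sqrt 2 * (x - 1) + 1) / (Real.sqrt 2 * x)

noncomputable def Eop (y : ℝ → ℝ) (x : ℝ) : ℝ :=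
  y x * deriv (deriv y) x + (2 - x - deriv y x) * deriv y x + y x * (1 - y x / x ^ 2)

lemma sqrt2_mul : Real.sqrt 2 * Real.sqrt 2 = 2 :=
  Real.mul_self_sqrt (by norm_num)

lemma sqrt2_ne : Real.sqrt 2 ≠ 0 := by positivity

lemma Yfik_eventually (x : ℝ) (hx : x ≠ 0) (c : ℝ) :
    (fun z => Yfik z - c * z ^ 2) =ᶠ[nhds x]
      (fun z => Real.sqrt 2 / 2 * z + (1 - Real.sqrt 2) - (1 - Real.sqrt 2 / 2) * z⁻¹
        - c * z ^ 2) := by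
  filter_upwards [eventually_ne_nhds hx] with z hz
  unfold Yfik
  have h2 := sqrt2_mul
  have h2' : Real.sqrt 2 ^ 2 = 2 := by rw [sq]; exact h2
  have h3' : Real.sqrt 2 ^ 3 = 2 * Real.sqrt 2 := by rw [pow_succ, h2']
  have h4' : Real.sqrt 2 ^ 4 = 4 := by rw [show 4 = 2+2 from rfl, pow_add, h2']; norm_num
  field_simp
  ring_nf
  simp only [h2', h3', h4']
  ring

lemma gHasDeriv (c x : ℝ) (hx : x ≠ 0) :
    HasDerivAt (fun z => Yfik z - c * z ^ 2)
      (Real.sqrt 2 / 2 + (1 - Real.sqrt 2 / 2) / x ^ 2 - 2 * c * x) x := by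
  have h : HasDerivAt (fun z : ℝ => Real.sqrt 2 / 2 * z + (1 - Real.sqrt 2)
      - (1 - Real.sqrt 2 / 2) * z⁻¹ - c * z ^ 2)
      (Real.sqrt 2 / 2 + (1 - Real.sqrt 2 / 2) / x ^ 2 - 2 * c * x) x := by
    have h1 := ((hasDerivAt_id x).const_mul (Real.sqrt 2 / 2)).add_const (1 - Real.sqrt 2)
    have h2 := (hasDerivAt_inv hx).const_mul (1 - Real.sqrt 2 / 2)
    have h3 := (hasDerivAt_pow 2 x).const_mul c
    refine ((h1.sub h2).sub h3).congr_deriv ?_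
    field_simp
    ring
  exact h.congr_of_eventuallyEq (Yfik_eventually x hx c)

lemma gDeriv_eventually (c x : ℝ) (hx : x ≠ 0) :
    deriv (fun z => Yfik z - c * z ^ 2) =ᶠ[nhds x]
      (fun z => Real.sqrt 2 / 2 + (1 - Real.sqrt 2 / 2) / z ^ 2 - 2 * c * z) := by
  filter_upwards [eventually_ne_nhds hx] with z hz
  exact (gHasDeriv c z hz).deriv

lemma gDeriv2 (c x : ℝ) (hx : x ≠ 0) :
    deriv (deriv (fun z => Yfik z - c * z ^ 2)) x
      = -2 * (1 - Real.sqrt 2 / 2) / x ^ 3 - 2 * c := by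
  rw [Filter.EventuallyEq.deriv_eq (gDeriv_eventually c x hx)]
  have h : HasDerivAt (fun z : ℝ => Real.sqrt 2 / 2 + (1 - Real.sqrt 2 / 2) / z ^ 2
      - 2 * c * z) (-2 * (1 - Real.sqrt 2 / 2) / x ^ 3 - 2 * c) x := by
    have h2 : HasDerivAt (fun z : ℝ => (1 - Real.sqrt 2 / 2) / z ^ 2)
        (-2 * (1 - Real.sqrt 2 / 2) / x ^ 3) x := by
      have := ((hasDerivAt_pow 2 x).inv (pow_ne_zero 2 hx)).const_mul (1 - Real.sqrt 2 / 2)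
      have heq : (fun z : ℝ => (1 - Real.sqrt 2 / 2) / z ^ 2)
          = fun z : ℝ => (1 - Real.sqrt 2 / 2) * (z ^ 2)⁻¹ := by
        funext z; rw [div_eq_mul_inv]
      rw [heq]
      refine this.congr_deriv ?_
      field_simp; ring
    have := ((hasDerivAt_const x (Real.sqrt 2 / 2)).add h2).sub
      ((hasDerivAt_id x).const_mul (2 * c))
    refine this.congr_deriv ?_
    ring
  exact h.deriv

theorem stmt9 (lam : ℝ → ℝ) (δ : ℝ) (hlam : Differentiable ℝ lam)
    (hode : ∀ t : ℝ, deriv lam t = -δ * lam t) :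
    ∀ x : ℝ, 0 < x → ∀ t : ℝ,
      deriv (fun s => Yfik x - lam s * x ^ 2) t
          - Eop (fun z => Yfik z - lam t * z ^ 2) x =
        lam t * ((δ + 3 * lam t - 1) * x ^ 2 + 2 * (2 - Real.sqrt 2) * x
          - 3 * (2 - Real.sqrt 2) / x) := by
  intro x hx t
  have hx0 : x ≠ 0 := ne_of_gt hx
  have htime : deriv (fun s => Yfik x - lam s * x ^ 2) t = δ * lam t * x ^ 2 := by
    have h : HasDerivAt (fun s => Yfik x - lam s * x ^ 2)
        (δ * lam t * x ^ 2) t := by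
      have := (hlam t).hasDerivAt.mul_const (x ^ 2)
      have h2 := (hasDerivAt_const t (Yfik x)).sub this
      rw [hode t] at h2
      refine h2.congr_deriv ?_; ring
    exact h.deriv
  rw [htime]
  simp only [Eop]
  rw [(gHasDeriv (lam t) x hx0).deriv, gDeriv2 (lam t) x hx0]
  have hY : Yfik x - lam t * x ^ 2
      = Real.sqrt 2 / 2 * x + (1 - Real.sqrt 2) - (1 - Real.sqrt 2 / 2) * x⁻¹
        - lam t * x ^ 2 := by
    have := (Yfik_eventually x hx0 (lam t)).eq_of_nhds
    simpa using this
  show _ - (_ * _ + _ + (Yfik x - lam t * x ^ 2) * (1 - (Yfik x - lam t * x ^ 2) / x ^ 2)) = _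
  rw [hY]
  have h2 := sqrt2_mul
  have h2' : Real.sqrt 2 ^ 2 = 2 := by rw [sq]; exact h2
  have h3' : Real.sqrt 2 ^ 3 = 2 * Real.sqrt 2 := by rw [pow_succ, h2']
  have h4' : Real.sqrt 2 ^ 4 = 4 := by rw [show 4 = 2+2 from rfl, pow_add, h2']; norm_num
  field_simp
  ring_nf
  simp only [h2', h3', h4']
  ring
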